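/- Let n ≥ 18 and D = {i : 1 ≤ i ≤ 2^{n+1} − 3, i odd}. Let U be an irreducible solution of length ℓ and weight w ≥ 2 for D whose density lies in [1/n, 1/(n−1)], so that its support φ_U has exactly w jumps. Write φ_U, up to a cyclic shift of its argument, as the concatenation of w geometric runs: the sequence of values φ_U(0),…,φ_U(ℓ−1) equals n_1, 2n_1, …, 2^{ℓ_1−1}n_1, n_2, 2n_2, …, 2^{ℓ_2−1}n_2, …, n_w, …, 2^{ℓ_w−1}n_w, where ℓ_1 + ⋯ + ℓ_w = ℓ and n_{k+1} < 2^{ℓ_k} n_k for each k (indices mod w). Then: (i) ℓ_k ≤ n + 1 for all 1 ≤ k ≤ w; (ii) every n_k is odd; (iii) if n_k > 2^u for some integer u ≥ 1, then ℓ_k ≤ n − u; (iv) if ℓ_i ≥ n for some i, then n_i = 1 and ℓ_j ≤ n − 1 for all j ≠ i; moreover there is at most one index j with ℓ_j = n − 1, and for such j one has n_j = 3. -/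

import Mathlib

/-- The binary weight `s₂(m)`: the sum of the base-2 digits of `m`. -/
def s2 (m : ℕ) : ℕ := (Nat.digits 2 m).sum

/-- The shift map on `{0, …, 2^ℓ - 1}`: it fixes `2^ℓ - 1` and sends any other `i`
to the remainder of `2·i` modulo `2^ℓ - 1`. -/
def shift2 (ℓ i : ℕ) : ℕ := if i = 2 ^ ℓ - 1 then i else (2 * i) % (2 ^ ℓ - 1)

/-- `U : ℕ → ℕ` (supported on `D`) is a solution of length `ℓ` for `D`:
`0 ≤ u_d ≤ 2^ℓ - 1` and `∑ d·u_d` is a positive multiple of `2^ℓ - 1`. -/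
structure IsSolution (D : Finset ℕ) (ℓ : ℕ) (U : ℕ → ℕ) : Prop where
  len_pos : 1 ≤ ℓ
  bounded : ∀ d, U d ≤ 2 ^ ℓ - 1
  supp_sub : ∀ d, d ∉ D → U d = 0
  dvd : (2 ^ ℓ - 1) ∣ ∑ d ∈ D, d * U d
  pos : 0 < ∑ d ∈ D, d * U d

/-- The weight `s(U) = ∑_{d ∈ D} s₂(u_d)` of a solution. -/
def weight (D : Finset ℕ) (U : ℕ → ℕ) : ℕ := ∑ d ∈ D, s2 (U d)

/-- The support map `φ_U(k) = (∑_{d ∈ D} d·δ^k(u_d)) / (2^ℓ - 1)` of a solution,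
viewed as an `ℓ`-periodic function on `ℕ`. -/
def supportMap (D : Finset ℕ) (ℓ : ℕ) (U : ℕ → ℕ) (k : ℕ) : ℕ :=
  (∑ d ∈ D, d * (shift2 ℓ)^[k] (U d)) / (2 ^ ℓ - 1)

/-- A solution is irreducible when its support map is injective on `ℤ/ℓℤ`,
i.e. injective on `{0, …, ℓ-1}`. -/
def IrreducibleSol (D : Finset ℕ) (ℓ : ℕ) (U : ℕ → ℕ) : Prop :=
  Set.InjOn (supportMap D ℓ U) ↑(Finset.range ℓ)

/-- `U` is a shift of `V` (coordinatewise iterate of the shift map). -/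
def IsShiftOf (ℓ : ℕ) (U V : ℕ → ℕ) : Prop :=
  ∃ k, ∀ d, U d = (shift2 ℓ)^[k] (V d)

/-- The set of odd integers `1 ≤ i ≤ d`. -/
def oddUpTo (d : ℕ) : Finset ℕ := (Finset.range (d + 1)).filter (fun i => i % 2 = 1)

/-- `D = {i : 1 ≤ i ≤ 2^{n+1} - 3, i odd}`. -/
def oddD (n : ℕ) : Finset ℕ := oddUpTo (2 ^ (n + 1) - 3)

/-- The solution with `u_a = 1` and all other coordinates `0`. -/
def sol1 (a : ℕ) : ℕ → ℕ := fun d => if d = a then 1 else 0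

/-- The solution with `u_a = x`, `u_b = y` and all other coordinates `0`. -/
def sol2 (a x b y : ℕ) : ℕ → ℕ := fun d => if d = a then x else if d = b then y else 0

/-- The solution with `u_a = x`, `u_b = y`, `u_c = z` and all other coordinates `0`. -/
def sol3 (a x b y c z : ℕ) : ℕ → ℕ :=
  fun d => if d = a then x else if d = b then y else if d = c then z else 0


namespace RunAux


lemma s2_zero : s2 0 = 0 := by simp [s2]

lemma s2_succ (u : ℕ) (hu : u ≠ 0) : s2 u = u % 2 + s2 (u / 2) := by
  unfold s2
  rw [Nat.digits_def' (by norm_num : 1 < 2) (Nat.pos_of_ne_zero hu)]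
  simp

lemma s2_pow_sub_one (ℓ : ℕ) : s2 (2 ^ ℓ - 1) = ℓ := by
  induction ℓ with
  | zero => simp [s2_zero]
  | succ m ih =>
    have h2 : (2:ℕ) ^ (m+1) = 2 * 2 ^ m := by ring
    have hp : (1:ℕ) ≤ 2 ^ m := Nat.one_le_two_pow
    have hne : 2 ^ (m+1) - 1 ≠ 0 := by omega
    rw [s2_succ _ hne]
    have e1 : (2 ^ (m+1) - 1) % 2 = 1 := by omega
    have e2 : (2 ^ (m+1) - 1) / 2 = 2 ^ m - 1 := by omega
    rw [e1, e2, ih]; omega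

-- sum of bits
lemma s2_eq_sum_bits (ℓ : ℕ) : ∀ u < 2 ^ ℓ, ∑ j ∈ Finset.range ℓ, (u / 2 ^ j % 2) = s2 u := by
  induction ℓ with
  | zero => intro u hu; interval_cases u; simp [s2_zero]
  | succ m ih =>
    intro u hu
    rcases Nat.eq_zero_or_pos u with rfl | hpos
    · simp [s2_zero]
    · rw [Finset.sum_range_succ' (fun j => u / 2 ^ j % 2)]
      have e : ∀ j, u / 2 ^ (j+1) = (u/2) / 2 ^ j := by
        intro j
        rw [pow_succ']
        rw [Nat.div_div_eq_div_mul]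
      simp only [e]
      have h2 : u / 2 < 2 ^ m := by
        have : (2:ℕ) ^ (m+1) = 2 * 2 ^ m := by ring
        omega
      rw [ih (u/2) h2, s2_succ u (by omega)]
      simp [Nat.add_comm]



section
variable {ℓ : ℕ} (hl : 1 ≤ ℓ)

lemma half_le (hl : 1 ≤ ℓ) : 2 * 2^(ℓ-1) = 2^ℓ := by
  rw [← pow_succ']; congr 1; omega

lemma shift2_le {v : ℕ} (hl : 1 ≤ ℓ) (hv : v ≤ 2^ℓ - 1) : shift2 ℓ v ≤ 2^ℓ - 1 := by
  unfold shift2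
  have h1 : (1:ℕ) ≤ 2^ℓ := Nat.one_le_two_pow
  split
  · omega
  · have := Nat.mod_lt (2*v) (y := 2^ℓ - 1) (by omega)
    omega

lemma shift2_eq {v : ℕ} (hl : 1 ≤ ℓ) (hv : v ≤ 2^ℓ - 1) :
    shift2 ℓ v + (if 2^(ℓ-1) ≤ v then 2^ℓ - 1 else 0) = 2 * v := by
  have hh := half_le hl
  have h1 : (1:ℕ) ≤ 2^(ℓ-1) := Nat.one_le_two_pow
  unfold shift2
  by_cases he : v = 2^ℓ - 1
  · rw [if_pos he, if_pos (by omega)]; omega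
  · rw [if_neg he]
    by_cases hb : 2^(ℓ-1) ≤ v
    · rw [if_pos hb]
      have : (2*v) % (2^ℓ - 1) = 2*v - (2^ℓ-1) := by
        rw [Nat.mod_eq_sub_mod (by omega), Nat.mod_eq_of_lt (by omega)]
      omega
    · rw [if_neg hb, Nat.mod_eq_of_lt (by omega)]; omega

lemma shift2_iter_le {v : ℕ} (hl : 1 ≤ ℓ) (hv : v ≤ 2^ℓ - 1) (k : ℕ) :
    (shift2 ℓ)^[k] v ≤ 2^ℓ - 1 := by
  induction k with
  | zero => simpa
  | succ m ih => rw [Function.iterate_succ_apply']; exact shift2_le hl ih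

lemma shift2_iter_lt {v : ℕ} (hl : 1 ≤ ℓ) (hv : v < 2^ℓ - 1) (k : ℕ) :
    (shift2 ℓ)^[k] v = (2^k * v) % (2^ℓ - 1) := by
  have h1 : (1:ℕ) ≤ 2^ℓ := Nat.one_le_two_pow
  induction k with
  | zero => simp [Nat.mod_eq_of_lt (by omega : v < 2^ℓ - 1)]
  | succ m ih =>
    rw [Function.iterate_succ_apply', ih]
    unfold shift2
    rw [if_neg (by have := Nat.mod_lt (2^m*v) (y := 2^ℓ-1) (by omega); omega)]
    have e : 2 * (2 ^ m * v % (2 ^ ℓ - 1)) % (2^ℓ-1) = 2 * (2^m * v) % (2^ℓ-1) := by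
      rw [Nat.mul_mod, Nat.mod_mod_of_dvd]
      · rw [← Nat.mul_mod]
      · exact dvd_refl _
    rw [e]; congr 1; ring

end

lemma shift2_iter_period {v : ℕ} (hl : 1 ≤ ℓ) (hv : v ≤ 2^ℓ - 1) :
    (shift2 ℓ)^[ℓ] v = v := by
  have h1 : (1:ℕ) ≤ 2^ℓ := Nat.one_le_two_pow
  rcases eq_or_lt_of_le hv with rfl | hlt
  · exact Function.iterate_fixed (by unfold shift2; rw [if_pos rfl]) ℓ
  · rw [shift2_iter_lt hl hlt]
    obtain ⟨N, hN⟩ : ∃ N, 2^ℓ - 1 = N ∧ 2^ℓ = N + 1 := ⟨2^ℓ-1, rfl, by omega⟩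
    obtain ⟨hN1, hN2⟩ := hN
    rw [hN1, hN2]
    have : (N + 1) * v = v + N * v := by ring
    rw [this, Nat.add_mul_mod_self_left, Nat.mod_eq_of_lt (by omega)]



-- pure arithmetic core of the "bit" lemma
lemma topbit_aux (A B' a c : ℕ) (hA1 : 1 ≤ A) (hB'1 : 1 ≤ B')
    (haB : a < 2*B') (hcA : c < A) (hne : (2*B')*c + a < A*(2*B') - 1) :
    A * ((2*B')*c + a) % (A*(2*B') - 1) = A*a + c
    ∧ (A*B' ≤ A*a + c ↔ ((2*B')*c + a) / B' % 2 = 1) := by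
  set B := 2*B' with hBB
  have one_le_AB : 1 ≤ A * B := Nat.mul_pos (by omega) (by omega)
  obtain ⟨m, hm⟩ := Nat.exists_eq_add_of_le one_le_AB
  constructor
  · have e1 : A * (B*c + a) = A * a + c + (A * B - 1) * c := by
      have g3 : A * (B*c + a) = (A*B)*c + A*a := by ring
      rw [g3, hm, Nat.add_sub_cancel_left]
      ring
    rw [e1, Nat.add_mul_mod_self_left]
    apply Nat.mod_eq_of_lt
    have hle : A * a + c + 1 ≤ A * B := by
      have g1 : A*(a+1) ≤ A*B := Nat.mul_le_mul_left A (by omega)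
      have g2 : A*(a+1) = A*a + A := by ring
      omega
    rcases eq_or_lt_of_le hle with he | hlt2
    · exfalso
      have e4 : (c+1) + A * a = A * B := by omega
      have hc1 : c = A - 1 := by
        by_contra hcc
        have h5 : c + 1 < A := by omega
        have m1 : ((c+1) + A*a) % A = (c+1) % A := by
          conv_lhs => rw [Nat.mul_comm A a]
          exact Nat.add_mul_mod_self_right (c+1) a A
        have m2 : (A * B) % A = 0 := Nat.mul_mod_right A B
        rw [e4, m2, Nat.mod_eq_of_lt h5] at m1
        omega
      have e5 : A * (a + 1) = A * B := by
        have g4 : A * (a+1) = A * a + A := by ring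
        omega
      have e6 : a + 1 = B := Nat.eq_of_mul_eq_mul_left (by omega) e5
      obtain ⟨p, hp⟩ : ∃ p, A = p + 1 := ⟨A-1, by omega⟩
      have gBA : A * B = B * c + B := by
        rw [hp]
        have : c = p := by omega
        rw [this]
        ring
      omega
    · omega
  · have hdiv : (B*c + a) / B' % 2 = a / B' := by
      have e3 : B*c + a = a + B' * (2 * c) := by rw [hBB]; ring
      have hlt2 : a / B' < 2 := by
        apply Nat.div_lt_of_lt_mul; omega
      rw [e3, Nat.add_mul_div_left _ _ (by omega : 0 < B'),
        Nat.add_mul_mod_self_left, Nat.mod_eq_of_lt hlt2]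
    rw [hdiv]
    constructor
    · intro h
      have h2 : B' ≤ a := by
        by_contra hh
        push_neg at hh
        have g5 : A * a + c < A * B' := by
          calc A * a + c < A * a + A := by omega
          _ = A * (a+1) := by ring
          _ ≤ A * B' := Nat.mul_le_mul_left A (by omega)
        omega
      have : a / B' = 1 := by
        apply Nat.div_eq_of_lt_le (by omega)
        omega
      omega
    · intro h
      have h2 : B' ≤ a := by
        by_contra hh
        push_neg at hh
        rw [Nat.div_eq_of_lt hh] at h
        omega
      calc A * B' ≤ A * a := Nat.mul_le_mul_left A h2
      _ ≤ A * a + c := by omega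

section
variable {ℓ : ℕ}

lemma shift2_iter_topbit {u k : ℕ} (hl : 1 ≤ ℓ) (hu : u < 2^ℓ - 1) (hk : k < ℓ) :
    (2^(ℓ-1) ≤ (shift2 ℓ)^[k] u ↔ u / 2^(ℓ-1-k) % 2 = 1) := by
  rw [shift2_iter_lt hl hu]
  have hBB : 2^(ℓ-k) = 2 * 2^(ℓ-1-k) := by rw [← pow_succ']; congr 1; omega
  have hAB : 2^k * 2^(ℓ-k) = 2^ℓ := by rw [← pow_add]; congr 1; omega
  have hAB' : 2^k * 2^(ℓ-1-k) = 2^(ℓ-1) := by rw [← pow_add]; congr 1; omega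
  have hdm : u = 2^(ℓ-k) * (u / 2^(ℓ-k)) + u % 2^(ℓ-k) := (Nat.div_add_mod u _).symm
  have haB : u % 2^(ℓ-k) < 2^(ℓ-k) := Nat.mod_lt _ (by positivity)
  have hcA : u / 2^(ℓ-k) < 2^k := by
    apply Nat.div_lt_of_lt_mul
    rw [Nat.mul_comm, hAB]
    have : (1:ℕ) ≤ 2^ℓ := Nat.one_le_two_pow
    omega
  obtain ⟨key, hiff⟩ := topbit_aux (2^k) (2^(ℓ-1-k)) (u % 2^(ℓ-k)) (u / 2^(ℓ-k))
    Nat.one_le_two_pow Nat.one_le_two_pow (by rw [← hBB]; exact haB) hcA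
    (by rw [← hBB, ← hdm, hAB]; exact hu)
  rw [← hBB, ← hdm] at key hiff
  rw [hAB] at key
  rw [hAB'] at hiff
  rw [key]
  exact hiff

end

section counting
variable {ℓ : ℕ}

lemma count_topbit {u : ℕ} (hl : 1 ≤ ℓ) (hu : u ≤ 2^ℓ - 1) :
    ((Finset.range ℓ).filter (fun k => 2^(ℓ-1) ≤ (shift2 ℓ)^[k] u)).card = s2 u := by
  have h2 : (1:ℕ) ≤ 2^(ℓ-1) := Nat.one_le_two_pow
  have hhl : 2*2^(ℓ-1) = 2^ℓ := half_le hl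
  rcases eq_or_lt_of_le hu with rfl | hlt
  · rw [s2_pow_sub_one]
    rw [Finset.filter_true_of_mem, Finset.card_range]
    intro k _
    rw [Function.iterate_fixed (by unfold shift2; rw [if_pos rfl]) k]
    omega
  · have hcongr : (Finset.range ℓ).filter (fun k => 2^(ℓ-1) ≤ (shift2 ℓ)^[k] u)
        = (Finset.range ℓ).filter (fun k => u / 2^(ℓ-1-k) % 2 = 1) := by
      apply Finset.filter_congr
      intro k hk
      simp only [Finset.mem_range] at hk
      exact shift2_iter_topbit hl hlt hk
    rw [hcongr]
    have hbij : ((Finset.range ℓ).filter (fun k => u / 2^(ℓ-1-k) % 2 = 1)).card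
        = ((Finset.range ℓ).filter (fun j => u / 2^j % 2 = 1)).card := by
      apply Finset.card_bij (fun k _ => ℓ-1-k)
      · intro a ha
        simp only [Finset.mem_filter, Finset.mem_range] at ha ⊢
        exact ⟨by omega, ha.2⟩
      · intro a ha b hb hab
        simp only [Finset.mem_filter, Finset.mem_range] at ha hb
        omega
      · intro b hb
        simp only [Finset.mem_filter, Finset.mem_range] at hb
        refine ⟨ℓ-1-b, ?_, by omega⟩
        simp only [Finset.mem_filter, Finset.mem_range]
        have e : ℓ-1-(ℓ-1-b) = b := by omega
        rw [e]
        exact ⟨by omega, hb.2⟩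
    rw [hbij, Finset.card_filter]
    have e2 : ∑ j ∈ Finset.range ℓ, (if u / 2^j % 2 = 1 then 1 else 0)
        = ∑ j ∈ Finset.range ℓ, (u / 2^j % 2) := by
      apply Finset.sum_congr rfl
      intro j _
      by_cases h : u / 2^j % 2 = 1
      · rw [if_pos h, h]
      · rw [if_neg h]
        omega
    rw [e2, s2_eq_sum_bits ℓ u (by have : (1:ℕ) ≤ 2^ℓ := Nat.one_le_two_pow; omega)]

end counting

section solution
variable {D : Finset ℕ} {ℓ : ℕ} {U : ℕ → ℕ}

lemma sigma_rec (hsol : IsSolution D ℓ U) (k : ℕ) :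
    (∑ d ∈ D, d * (shift2 ℓ)^[k+1] (U d))
      + (2^ℓ-1) * (∑ d ∈ D.filter (fun d => 2^(ℓ-1) ≤ (shift2 ℓ)^[k] (U d)), d)
      = 2 * ∑ d ∈ D, d * (shift2 ℓ)^[k] (U d) := by
  have hl := hsol.len_pos
  rw [Finset.mul_sum, Finset.mul_sum]
  rw [Finset.sum_filter, ← Finset.sum_add_distrib]
  apply Finset.sum_congr rfl
  intro d _
  have hv : (shift2 ℓ)^[k] (U d) ≤ 2^ℓ-1 := shift2_iter_le hl (hsol.bounded d) k
  have he := shift2_eq hl hv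
  rw [Function.iterate_succ_apply']
  by_cases hP : 2^(ℓ-1) ≤ (shift2 ℓ)^[k] (U d)
  · rw [if_pos hP] at he ⊢
    calc d * shift2 ℓ ((shift2 ℓ)^[k] (U d)) + (2^ℓ-1) * d
        = d * (shift2 ℓ ((shift2 ℓ)^[k] (U d)) + (2^ℓ-1)) := by ring
      _ = d * (2 * (shift2 ℓ)^[k] (U d)) := by rw [he]
      _ = 2 * (d * (shift2 ℓ)^[k] (U d)) := by ring
  · rw [if_neg hP] at he ⊢
    calc d * shift2 ℓ ((shift2 ℓ)^[k] (U d)) + 0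
        = d * (shift2 ℓ ((shift2 ℓ)^[k] (U d)) + 0) := by ring
      _ = d * (2 * (shift2 ℓ)^[k] (U d)) := by rw [he]
      _ = 2 * (d * (shift2 ℓ)^[k] (U d)) := by ring

lemma sigma_dvd (hsol : IsSolution D ℓ U) (k : ℕ) :
    (2^ℓ-1) ∣ ∑ d ∈ D, d * (shift2 ℓ)^[k] (U d) := by
  induction k with
  | zero => simpa using hsol.dvd
  | succ m ih =>
    have hrec := sigma_rec hsol m
    have h2 : (2^ℓ-1) ∣ 2 * ∑ d ∈ D, d * (shift2 ℓ)^[m] (U d) := ih.mul_left 2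
    have h3 : (2^ℓ-1) ∣ (2^ℓ-1) * (∑ d ∈ D.filter (fun d => 2^(ℓ-1) ≤ (shift2 ℓ)^[m] (U d)), d) :=
      dvd_mul_right _ _
    have e : ∑ d ∈ D, d * (shift2 ℓ)^[m+1] (U d)
        = 2 * (∑ d ∈ D, d * (shift2 ℓ)^[m] (U d))
          - (2^ℓ-1) * (∑ d ∈ D.filter (fun d => 2^(ℓ-1) ≤ (shift2 ℓ)^[m] (U d)), d) := by
      omega
    rw [e]
    exact Nat.dvd_sub h2 h3

lemma phi_rec (hsol : IsSolution D ℓ U) (k : ℕ) :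
    supportMap D ℓ U (k+1) + (∑ d ∈ D.filter (fun d => 2^(ℓ-1) ≤ (shift2 ℓ)^[k] (U d)), d)
      = 2 * supportMap D ℓ U k := by
  have hl := hsol.len_pos
  have hN : 0 < 2^ℓ-1 := by
    have : (2:ℕ)^1 ≤ 2^ℓ := Nat.pow_le_pow_right (by norm_num) hl
    omega
  obtain ⟨a, hA⟩ := sigma_dvd hsol (k+1)
  obtain ⟨b, hB⟩ := sigma_dvd hsol k
  have hrec := sigma_rec hsol k
  rw [hA, hB] at hrec
  unfold supportMap
  rw [hA, hB, Nat.mul_div_cancel_left _ hN, Nat.mul_div_cancel_left _ hN]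
  set T := ∑ d ∈ D.filter (fun d => 2^(ℓ-1) ≤ (shift2 ℓ)^[k] (U d)), d
  apply Nat.eq_of_mul_eq_mul_left hN
  calc (2^ℓ-1) * (a + T) = (2^ℓ-1)*a + (2^ℓ-1)*T := by ring
    _ = 2 * ((2^ℓ-1)*b) := hrec
    _ = (2^ℓ-1) * (2*b) := by ring

lemma iter_mod (hl : 1 ≤ ℓ) {u : ℕ} (hu : u ≤ 2^ℓ-1) (q : ℕ) :
    (shift2 ℓ)^[q] u = (shift2 ℓ)^[q % ℓ] u := by
  conv_lhs => rw [← Nat.mod_add_div q ℓ]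
  rw [Function.iterate_add_apply, Function.iterate_mul]
  rw [Function.iterate_fixed (shift2_iter_period hl hu) (q/ℓ)]

lemma phi_mod (hsol : IsSolution D ℓ U) (q : ℕ) :
    supportMap D ℓ U q = supportMap D ℓ U (q % ℓ) := by
  unfold supportMap
  congr 1
  apply Finset.sum_congr rfl
  intro d _
  rw [iter_mod hsol.len_pos (hsol.bounded d) q]

lemma count_total (hsol : IsSolution D ℓ U) :
    ∑ k ∈ Finset.range ℓ, (D.filter (fun d => 2^(ℓ-1) ≤ (shift2 ℓ)^[k] (U d))).card
      = weight D U := by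
  unfold weight
  have e : ∀ k, (D.filter (fun d => 2^(ℓ-1) ≤ (shift2 ℓ)^[k] (U d))).card
      = ∑ d ∈ D, (if 2^(ℓ-1) ≤ (shift2 ℓ)^[k] (U d) then 1 else 0) := by
    intro k
    rw [Finset.card_filter]
  simp only [e]
  rw [Finset.sum_comm]
  apply Finset.sum_congr rfl
  intro d _
  rw [← Finset.card_filter]
  exact count_topbit hsol.len_pos (hsol.bounded d)

lemma window_sum (f : ℕ → ℕ) (hf : ∀ q, f (q+ℓ) = f q) (t : ℕ) :
    ∑ m ∈ Finset.range ℓ, f (t+m) = ∑ q ∈ Finset.range ℓ, f q := by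
  induction t with
  | zero => simp
  | succ s ih =>
    have e1 : ∑ m ∈ Finset.range (ℓ+1), f (s+m)
        = ∑ m ∈ Finset.range ℓ, f (s+(m+1)) + f (s+0) := Finset.sum_range_succ' _ ℓ
    have e2 : ∑ m ∈ Finset.range (ℓ+1), f (s+m)
        = ∑ m ∈ Finset.range ℓ, f (s+m) + f (s+ℓ) := Finset.sum_range_succ _ ℓ
    have e3 : ∑ m ∈ Finset.range ℓ, f (s+1+m) = ∑ m ∈ Finset.range ℓ, f (s+(m+1)) := by
      apply Finset.sum_congr rfl
      intro m _
      congr 1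
      omega
    have e4 : f (s+ℓ) = f (s+0) := by rw [hf s]; congr 1
    omega

end solution

end RunAux

/-- For `n ≥ 18`, `D = {i : 1 ≤ i ≤ 2^{n+1} − 3, i odd}`, let `U` be an irreducible
solution of length `ℓ` and weight `w ≥ 2` with density in `[1/n, 1/(n−1)]`, whose
support (up to a cyclic shift by `t` of the argument) is the concatenation of `w`
geometric runs with initial terms `nk 0, …, nk (w−1)` and lengths `lk 0, …, lk (w−1)`,
the jumps happening exactly at the end of each run.  Then: (i) each `lk k ≤ n + 1`;
(ii) each `nk k` is odd; (iii) if `nk k > 2^u` with `u ≥ 1` then `lk k ≤ n − u`;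
(iv) if `lk i ≥ n` then `nk i = 1`, all other `lk j ≤ n − 1`, at most one `j` has
`lk j = n − 1`, and such `j` has `nk j = 3`. -/
theorem run_lengths_and_initial_terms
    (n : ℕ) (hn : 18 ≤ n) (ℓ w : ℕ) (U : ℕ → ℕ)
    (hsol : IsSolution (oddD n) ℓ U)
    (hirr : IrreducibleSol (oddD n) ℓ U)
    (hw : weight (oddD n) U = w) (hw2 : 2 ≤ w)
    (hlow : (n - 1) * w ≤ ℓ) (hhigh : ℓ ≤ n * w)
    (nk lk : ℕ → ℕ)
    (hnkpos : ∀ k < w, 0 < nk k) (hlkpos : ∀ k < w, 0 < lk k)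
    (hsum : ∑ k ∈ Finset.range w, lk k = ℓ)
    (t : ℕ)
    (hdesc : ∀ k < w, ∀ j < lk k,
      supportMap (oddD n) ℓ U (t + (∑ k' ∈ Finset.range k, lk k') + j) = 2 ^ j * nk k)
    (hjump : ∀ k < w, nk ((k + 1) % w) < 2 ^ lk k * nk k) :
    (∀ k < w, lk k ≤ n + 1) ∧
    (∀ k < w, nk k % 2 = 1) ∧
    (∀ k < w, ∀ u, 1 ≤ u → 2 ^ u < nk k → lk k ≤ n - u) ∧
    (∀ i < w, n ≤ lk i →
      nk i = 1 ∧ (∀ j < w, j ≠ i → lk j ≤ n - 1) ∧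
      (∀ j₁ < w, ∀ j₂ < w, lk j₁ = n - 1 → lk j₂ = n - 1 → j₁ = j₂) ∧
      (∀ j < w, lk j = n - 1 → nk j = 3)) := by
  classical
  have hl : 1 ≤ ℓ := hsol.len_pos
  have hw0 : 0 < w := by omega
  have hpow4 : 4 ≤ 2^(n+1) := by
    calc (4:ℕ) = 2^2 := by norm_num
    _ ≤ 2^(n+1) := Nat.pow_le_pow_right (by norm_num) (by omega)
  set D := oddD n with hD
  set φ := supportMap D ℓ U with hphidef
  set S : ℕ → ℕ := fun k => ∑ k' ∈ Finset.range k, lk k' with hSdef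
  have hSw : S w = ℓ := hsum
  have hSsucc : ∀ k, S (k+1) = S k + lk k := fun k => Finset.sum_range_succ lk k
  have hSmono : ∀ a b : ℕ, a ≤ b → S a ≤ S b := by
    intro a b hab
    exact Finset.sum_le_sum_of_subset (Finset.range_subset_range.2 hab)
  have hSlt : ∀ k < w, S k + lk k ≤ ℓ := by
    intro k hk
    rw [← hSsucc, ← hSw]
    exact hSmono _ _ (by omega)
  have hDmem : ∀ d ∈ D, d % 2 = 1 ∧ 1 ≤ d ∧ d ≤ 2^(n+1) - 3 := by
    intro d hd
    rw [hD] at hd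
    unfold oddD oddUpTo at hd
    simp only [Finset.mem_filter, Finset.mem_range] at hd
    omega
  set T : ℕ → ℕ := fun q => ∑ d ∈ D.filter (fun d => 2^(ℓ-1) ≤ (shift2 ℓ)^[q] (U d)), d with hTdef
  set c : ℕ → ℕ := fun q => (D.filter (fun d => 2^(ℓ-1) ≤ (shift2 ℓ)^[q] (U d))).card with hcdef
  have hrec : ∀ q, φ (q+1) + T q = 2 * φ q := fun q => RunAux.phi_rec hsol q
  have hphimod : ∀ q, φ q = φ (q % ℓ) := fun q => RunAux.phi_mod hsol q
  have hcperiod : ∀ q, c (q+ℓ) = c q := by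
    intro q
    simp only [hcdef]
    congr 1
    apply Finset.filter_congr
    intro d _
    rw [RunAux.iter_mod hl (hsol.bounded d) (q+ℓ), RunAux.iter_mod hl (hsol.bounded d) q,
      Nat.add_mod_right]
  have hwindow : ∑ m ∈ Finset.range ℓ, c (t+m) = w := by
    rw [RunAux.window_sum c hcperiod t, ← hw]
    exact RunAux.count_total hsol
  have hT0c : ∀ q, T q = 0 → c q = 0 := by
    intro q h
    simp only [hTdef] at h
    simp only [hcdef]
    rw [Finset.card_eq_zero]
    by_contra hne
    obtain ⟨d, hd⟩ := Finset.nonempty_iff_ne_empty.2 hne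
    have h1 : 1 ≤ d := (hDmem d (Finset.mem_of_mem_filter d hd)).2.1
    have h2 : d ≤ ∑ x ∈ D.filter (fun d => 2^(ℓ-1) ≤ (shift2 ℓ)^[q] (U d)), x :=
      Finset.single_le_sum (f := fun x : ℕ => x) (fun i _ => Nat.zero_le i) hd
    omega
  have hc0T : ∀ q, c q = 0 → T q = 0 := by
    intro q h
    simp only [hcdef, Finset.card_eq_zero] at h
    simp only [hTdef, h, Finset.sum_empty]
  have hphi : ∀ k < w, ∀ j < lk k, φ (t + S k + j) = 2^j * nk k := by
    intro k hk j hj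
    exact hdesc k hk j hj
  have hend : ∀ k < w, φ (t + S k + (lk k - 1) + 1) = nk ((k+1)%w) := by
    intro k hk
    have hlp := hlkpos k hk
    have hE : t + S k + (lk k - 1) + 1 = t + S (k+1) := by rw [hSsucc]; omega
    rw [hE]
    rcases Nat.lt_or_ge (k+1) w with h | h
    · rw [Nat.mod_eq_of_lt h]
      have h2 := hphi (k+1) h 0 (hlkpos _ h)
      simpa using h2
    · have hk1 : k+1 = w := by omega
      have hmod : (k+1)%w = 0 := by rw [hk1, Nat.mod_self]
      rw [hmod, hk1, hSw]
      have h3 : φ (t+ℓ) = φ t := by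
        rw [hphimod (t+ℓ), hphimod t, Nat.add_mod_right]
      rw [h3]
      have h2 := hphi 0 hw0 0 (hlkpos 0 hw0)
      simpa [show S 0 = 0 from rfl] using h2
  have hpow2 : ∀ k < w, 2 * (2^(lk k - 1) * nk k) = 2^(lk k) * nk k := by
    intro k hk
    rw [← mul_assoc, ← pow_succ']
    congr 2
    have := hlkpos k hk
    omega
  have hTp : ∀ k < w, nk ((k+1)%w) + T (t + S k + (lk k - 1)) = 2^(lk k) * nk k := by
    intro k hk
    have h1 := hrec (t + S k + (lk k - 1))
    rw [hend k hk, hphi k hk (lk k - 1) (by have := hlkpos k hk; omega)] at h1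
    have := hpow2 k hk
    omega
  have hvanish : ∀ m < ℓ, (∀ k < w, m ≠ S k + (lk k - 1)) → c (t+m) = 0 := by
    intro m hm hnot
    have hloc : ∃ k, k < w ∧ S k ≤ m ∧ m < S (k+1) := by
      have haux : ∀ ww, ww ≤ w → m < S ww → ∃ k, k < ww ∧ S k ≤ m ∧ m < S (k+1) := by
        intro ww
        induction ww with
        | zero => intro _ h0; simp [hSdef] at h0
        | succ vv ih =>
          intro hle hmv
          rcases Nat.lt_or_ge m (S vv) with h | h
          · obtain ⟨k, hk1, hk2⟩ := ih (by omega) h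
            exact ⟨k, by omega, hk2⟩
          · exact ⟨vv, by omega, h, hmv⟩
      exact haux w le_rfl (by rw [hSw]; exact hm)
    obtain ⟨k, hkw, h1, h2⟩ := hloc
    rw [hSsucc] at h2
    have hlp := hlkpos k hkw
    set j := m - S k with hj
    have hjlt : j < lk k := by omega
    have hjne : j ≠ lk k - 1 := by
      intro he
      exact hnot k hkw (by omega)
    have hj1 : j + 1 < lk k := by omega
    have hq := hrec (t + S k + j)
    rw [hphi k hkw j hjlt] at hq
    have hE : t + S k + j + 1 = t + S k + (j+1) := by omega
    rw [hE, hphi k hkw (j+1) hj1] at hq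
    have e : 2^(j+1) * nk k = 2 * (2^j * nk k) := by rw [pow_succ']; ring
    have hT0 : T (t + S k + j) = 0 := by omega
    have hmE : t + m = t + S k + j := by omega
    rw [hmE]
    exact hT0c _ hT0
  have hinj : ∀ k1 ∈ Finset.range w, ∀ k2 ∈ Finset.range w,
      S k1 + (lk k1 - 1) = S k2 + (lk k2 - 1) → k1 = k2 := by
    intro k1 h1 k2 h2 he
    simp only [Finset.mem_range] at h1 h2
    have hp1 := hlkpos k1 h1
    have hp2 := hlkpos k2 h2
    by_contra hne
    rcases Nat.lt_or_ge k1 k2 with h | h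
    · have g1 : S (k1+1) ≤ S k2 := hSmono _ _ (by omega)
      rw [hSsucc] at g1
      omega
    · have g1 : S (k2+1) ≤ S k1 := hSmono _ _ (by omega)
      rw [hSsucc] at g1
      omega
  set E := (Finset.range w).image (fun k => S k + (lk k - 1)) with hE
  have hEsub : E ⊆ Finset.range ℓ := by
    intro x hx
    rw [hE] at hx
    simp only [Finset.mem_image, Finset.mem_range] at hx
    obtain ⟨k, hk, hkx⟩ := hx
    have := hSlt k hk
    have := hlkpos k hk
    simp only [Finset.mem_range]
    omega
  have hsumE : ∑ m ∈ E, c (t+m) = w := by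
    rw [← hwindow]
    apply Finset.sum_subset hEsub
    intro m hm hnm
    apply hvanish m (Finset.mem_range.1 hm)
    intro k hk he
    apply hnm
    rw [hE]
    exact Finset.mem_image.2 ⟨k, Finset.mem_range.2 hk, he.symm⟩
  have hsumE2 : ∑ k ∈ Finset.range w, c (t + (S k + (lk k - 1))) = w := by
    have h1 : ∑ m ∈ E, c (t+m) = ∑ k ∈ Finset.range w, c (t + (S k + (lk k - 1))) := by
      rw [hE]
      exact Finset.sum_image (fun x hx y hy hxy => hinj x hx y hy hxy)
    rw [← h1]
    exact hsumE
  have hcge : ∀ k ∈ Finset.range w, 1 ≤ c (t + (S k + (lk k - 1))) := by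
    intro k hk
    have hkw := Finset.mem_range.1 hk
    have hTpk := hTp k hkw
    have hjp := hjump k hkw
    by_contra hc0
    push_neg at hc0
    have hceq0 : c (t + (S k + (lk k - 1))) = 0 := by omega
    have : T (t + (S k + (lk k - 1))) = 0 := hc0T _ hceq0
    rw [show t + (S k + (lk k - 1)) = t + S k + (lk k - 1) from by omega] at this
    omega
  have hceq : ∀ k ∈ Finset.range w, c (t + (S k + (lk k - 1))) = 1 := by
    by_contra hcon
    push_neg at hcon
    obtain ⟨k0, hk0, hne⟩ := hcon
    have hlt := Finset.sum_lt_sum hcge ⟨k0, hk0, by have := hcge k0 hk0; omega⟩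
    rw [hsumE2, Finset.sum_const, Finset.card_range, smul_eq_mul, mul_one] at hlt
    omega
  have hkey : ∀ k < w, ∃ d, d % 2 = 1 ∧ d ≤ 2^(n+1) - 3 ∧
      nk ((k+1)%w) + d = 2^(lk k) * nk k := by
    intro k hk
    have h1 := hceq k (Finset.mem_range.2 hk)
    rw [show t + (S k + (lk k - 1)) = t + S k + (lk k - 1) from by omega] at h1
    simp only [hcdef] at h1
    obtain ⟨d, hd⟩ := Finset.card_eq_one.1 h1
    have hdmem : d ∈ D.filter (fun d => 2^(ℓ-1) ≤ (shift2 ℓ)^[t + S k + (lk k - 1)] (U d)) := by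
      rw [hd]; exact Finset.mem_singleton_self d
    obtain ⟨ho, h1d, hub⟩ := hDmem d (Finset.mem_of_mem_filter d hdmem)
    have hTd : T (t + S k + (lk k - 1)) = d := by
      simp only [hTdef]
      rw [hd, Finset.sum_singleton]
    refine ⟨d, ho, hub, ?_⟩
    have := hTp k hk
    omega
  have hdist : ∀ k1 < w, ∀ k2 < w, nk k1 = nk k2 → k1 = k2 := by
    intro k1 h1 k2 h2 he
    have e1 : φ ((t + S k1) % ℓ) = nk k1 := by
      have h3 : φ (t + S k1) = nk k1 := by simpa using hphi k1 h1 0 (hlkpos _ h1)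
      exact (hphimod (t + S k1)).symm.trans h3
    have e2 : φ ((t + S k2) % ℓ) = nk k2 := by
      have h3 : φ (t + S k2) = nk k2 := by simpa using hphi k2 h2 0 (hlkpos _ h2)
      exact (hphimod (t + S k2)).symm.trans h3
    have hmem1 : ((t + S k1) % ℓ) ∈ (↑(Finset.range ℓ) : Set ℕ) := by
      simp only [Finset.coe_range, Set.mem_Iio]
      exact Nat.mod_lt _ (by omega)
    have hmem2 : ((t + S k2) % ℓ) ∈ (↑(Finset.range ℓ) : Set ℕ) := by
      simp only [Finset.coe_range, Set.mem_Iio]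
      exact Nat.mod_lt _ (by omega)
    have heq := hirr hmem1 hmem2
      (by show φ ((t + S k1) % ℓ) = φ ((t + S k2) % ℓ); rw [e1, e2, he])
    have hmeq : S k1 % ℓ = S k2 % ℓ := Nat.ModEq.add_left_cancel' t heq
    have hl1 : S k1 < ℓ := by have := hSlt k1 h1; have := hlkpos k1 h1; omega
    have hl2 : S k2 < ℓ := by have := hSlt k2 h2; have := hlkpos k2 h2; omega
    rw [Nat.mod_eq_of_lt hl1, Nat.mod_eq_of_lt hl2] at hmeq
    by_contra hne
    rcases Nat.lt_or_ge k1 k2 with h | h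
    · have g1 : S (k1+1) ≤ S k2 := hSmono _ _ (by omega)
      rw [hSsucc] at g1
      have := hlkpos k1 h1
      omega
    · have g1 : S (k2+1) ≤ S k1 := hSmono _ _ (by omega)
      rw [hSsucc] at g1
      have := hlkpos k2 h2
      omega
  -- (ii) all nk odd
  have hodd : ∀ k < w, nk k % 2 = 1 := by
    intro k hk
    obtain ⟨k', hk', hs⟩ : ∃ k', k' < w ∧ (k'+1)%w = k := by
      refine ⟨(k+w-1)%w, Nat.mod_lt _ (by omega), ?_⟩
      rw [Nat.mod_add_mod]
      rw [show k+w-1+1 = k+w from by omega, Nat.add_mod_right]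
      exact Nat.mod_eq_of_lt hk
    obtain ⟨d, hdo, hdu, he⟩ := hkey k' hk'
    rw [hs] at he
    have e2 := hpow2 k' hk'
    omega
  -- max bound
  have hbound : ∀ k < w, 2^(lk k - 1) * nk k ≤ 2^(n+1) - 3 := by
    obtain ⟨k0, hk0m, hm⟩ := Finset.exists_max_image (Finset.range w)
      (fun k => 2^(lk k - 1) * nk k) ⟨0, Finset.mem_range.2 hw0⟩
    have hk0 := Finset.mem_range.1 hk0m
    suffices hs : 2^(lk k0 - 1) * nk k0 ≤ 2^(n+1) - 3 by
      intro k hk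
      exact le_trans (hm k (Finset.mem_range.2 hk)) hs
    obtain ⟨d, hdo, hdu, he⟩ := hkey k0 hk0
    have hsw : (k0+1)%w < w := Nat.mod_lt _ (by omega)
    have h3 : nk ((k0+1)%w) ≤ 2^(lk ((k0+1)%w) - 1) * nk ((k0+1)%w) :=
      Nat.le_mul_of_pos_left _ (by positivity)
    have h4 := hm ((k0+1)%w) (Finset.mem_range.2 hsw)
    have e2 := hpow2 k0 hk0
    omega
  -- exponent bound from a strict lower bound on nk
  have hC : ∀ k < w, ∀ v, 2^v < nk k → lk k + v ≤ n + 1 := by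
    intro k hk v hv
    have h1 := hbound k hk
    have h2 : 2^(lk k - 1) * 2^v < 2^(lk k - 1) * nk k :=
      (Nat.mul_lt_mul_left (by positivity)).2 hv
    rw [← pow_add] at h2
    have h3 : 2^(lk k - 1 + v) < 2^(n+1) := by omega
    have h4 : lk k - 1 + v < n+1 := (Nat.pow_lt_pow_iff_right (by norm_num)).1 h3
    have := hlkpos k hk
    omega
  -- (i)
  have hi : ∀ k < w, lk k ≤ n + 1 := by
    intro k hk
    rcases eq_or_ne (nk k) 1 with h1 | h1
    · have hb := hbound k hk
      rw [h1, mul_one] at hb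
      have h2 : 2^(lk k - 1) < 2^(n+1) := by omega
      have h3 := (Nat.pow_lt_pow_iff_right (a := 2) (by norm_num)).1 h2
      omega
    · have h3 : 2^1 < nk k := by
        have := hodd k hk
        have := hnkpos k hk
        omega
      have := hC k hk 1 h3
      omega
  -- logs
  set v : ℕ → ℕ := fun k => Nat.log 2 (nk k) with hvdef
  have hvlt : ∀ k < w, nk k < 2^(v k + 1) := by
    intro k hk
    exact Nat.lt_pow_succ_log_self (by norm_num) _
  have hvstrict : ∀ k < w, nk k ≠ 1 → 2^(v k) < nk k := by
    intro k hk h1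
    have hvle : 2^(v k) ≤ nk k := Nat.pow_log_le_self 2 (by have := hnkpos k hk; omega)
    rcases eq_or_lt_of_le hvle with he | h
    · exfalso
      have ho := hodd k hk
      rcases Nat.eq_zero_or_pos (v k) with h0 | h0
      · rw [h0] at he
        simp at he
        omega
      · have h2 : 2^(v k) % 2 = 0 := by
          obtain ⟨m, hm⟩ : ∃ m, v k = m + 1 := ⟨v k - 1, by omega⟩
          rw [hm, pow_succ']
          omega
        omega
    · exact h
  have hvz : ∀ k < w, nk k = 1 → v k = 0 := by
    intro k hk h1
    simp only [hvdef, h1]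
    exact Nat.log_one_right 2
  have hCv : ∀ k < w, lk k + v k ≤ n + 1 := by
    intro k hk
    rcases eq_or_ne (nk k) 1 with h1 | h1
    · rw [hvz k hk h1]
      have := hi k hk
      omega
    · exact hC k hk (v k) (hvstrict k hk h1)
  have hsumv : ∑ k ∈ Finset.range w, v k ≤ 2*w := by
    have h1 : ∑ k ∈ Finset.range w, (lk k + v k) ≤ ∑ k ∈ Finset.range w, (n+1) :=
      Finset.sum_le_sum (fun k hk => hCv k (Finset.mem_range.1 hk))
    rw [Finset.sum_add_distrib, hsum, Finset.sum_const, Finset.card_range, smul_eq_mul] at h1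
    obtain ⟨m, hm⟩ : ∃ m, n = m + 1 := ⟨n - 1, by omega⟩
    rw [hm] at hlow h1
    simp only [Nat.add_sub_cancel] at hlow
    have e : w * (m + 1 + 1) = m * w + 2 * w := by ring
    omega
  -- cardinality bounds from distinctness
  have hA1 : ((Finset.range w).filter (fun k => v k ≤ 1)).card ≤ 2 := by
    have hmap : ∀ k ∈ (Finset.range w).filter (fun k => v k ≤ 1), nk k ∈ ({1,3} : Finset ℕ) := by
      intro k hk
      obtain ⟨hkr, hkv⟩ := Finset.mem_filter.1 hk
      have hkw := Finset.mem_range.1 hkr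
      have h2 : nk k < 2^(v k + 1) := hvlt k hkw
      have h3 : 2^(v k + 1) ≤ 2^2 := Nat.pow_le_pow_right (by norm_num) (by omega)
      have h4 : (2:ℕ)^2 = 4 := by norm_num
      have ho := hodd k hkw
      simp only [Finset.mem_insert, Finset.mem_singleton]
      omega
    have hinj2 : Set.InjOn nk ↑((Finset.range w).filter (fun k => v k ≤ 1)) := by
      intro a ha b hb he
      simp only [Finset.coe_filter, Set.mem_setOf_eq, Finset.mem_range] at ha hb
      exact hdist a ha.1 b hb.1 he
    calc ((Finset.range w).filter (fun k => v k ≤ 1)).card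
        ≤ ({1,3} : Finset ℕ).card := Finset.card_le_card_of_injOn nk hmap hinj2
      _ = 2 := by decide
  have hA2 : ((Finset.range w).filter (fun k => v k ≤ 2)).card ≤ 4 := by
    have hmap : ∀ k ∈ (Finset.range w).filter (fun k => v k ≤ 2),
        nk k ∈ ({1,3,5,7} : Finset ℕ) := by
      intro k hk
      obtain ⟨hkr, hkv⟩ := Finset.mem_filter.1 hk
      have hkw := Finset.mem_range.1 hkr
      have h2 : nk k < 2^(v k + 1) := hvlt k hkw
      have h3 : 2^(v k + 1) ≤ 2^3 := Nat.pow_le_pow_right (by norm_num) (by omega)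
      have h4 : (2:ℕ)^3 = 8 := by norm_num
      have ho := hodd k hkw
      simp only [Finset.mem_insert, Finset.mem_singleton]
      omega
    have hinj2 : Set.InjOn nk ↑((Finset.range w).filter (fun k => v k ≤ 2)) := by
      intro a ha b hb he
      simp only [Finset.coe_filter, Set.mem_setOf_eq, Finset.mem_range] at ha hb
      exact hdist a ha.1 b hb.1 he
    calc ((Finset.range w).filter (fun k => v k ≤ 2)).card
        ≤ ({1,3,5,7} : Finset ℕ).card := Finset.card_le_card_of_injOn nk hmap hinj2
      _ = 4 := by decide
  have hlow8 : 3 * w ≤ (∑ k ∈ Finset.range w, v k) + 8 := by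
    have hptw : ∀ k ∈ Finset.range w,
        3 ≤ v k + ((if v k ≤ 2 then 1 else 0) + 2 * (if v k ≤ 1 then 1 else 0)) := by
      intro k _
      by_cases h2 : v k ≤ 1
      · rw [if_pos (by omega : v k ≤ 2), if_pos h2]
        omega
      · by_cases h3 : v k ≤ 2
        · rw [if_pos h3, if_neg h2]
          omega
        · rw [if_neg h3, if_neg h2]
          omega
    have hsum3 := Finset.sum_le_sum hptw
    rw [Finset.sum_const, Finset.card_range, smul_eq_mul] at hsum3
    rw [Finset.sum_add_distrib, Finset.sum_add_distrib, ← Finset.mul_sum] at hsum3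
    rw [← Finset.card_filter, ← Finset.card_filter] at hsum3
    have := hA1
    have := hA2
    omega
  -- (iii)
  have hiii : ∀ k < w, ∀ u, 1 ≤ u → 2^u < nk k → lk k ≤ n - u := by
    intro k hk u hu1 hu2
    by_contra hcon
    push_neg at hcon
    have hCk := hC k hk u hu2
    have hlp := hlkpos k hk
    have hup : u ≤ n := by omega
    have hlkE : lk k = n + 1 - u := by omega
    obtain ⟨d, hdo, hdu, he⟩ := hkey k hk
    have hsw : (k+1)%w < w := Nat.mod_lt _ (by omega)
    have hsk : (k+1)%w ≠ k := by
      rcases Nat.lt_or_ge (k+1) w with h | h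
      · rw [Nat.mod_eq_of_lt h]
        omega
      · have hk1 : k+1 = w := by omega
        rw [hk1, Nat.mod_self]
        omega
    have hnk3 : 2^u + 1 ≤ nk k := by omega
    have hg : 2^(n+1) + 2^(n+1-u) ≤ 2^(lk k) * nk k := by
      rw [hlkE]
      calc 2^(n+1) + 2^(n+1-u) = 2^(n+1-u) * (2^u + 1) := by
            rw [Nat.mul_add, ← pow_add, mul_one]
            rw [show n+1-u+u = n+1 from by omega]
        _ ≤ 2^(n+1-u) * nk k := Nat.mul_le_mul_left _ hnk3
    have hns : 2^(n+1-u) < nk ((k+1)%w) := by omega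
    have hnspos : nk ((k+1)%w) ≠ 0 := by have := hnkpos _ hsw; omega
    have hvs : n+1-u ≤ v ((k+1)%w) :=
      (Nat.le_log_iff_pow_le (by norm_num) hnspos).2 (le_of_lt hns)
    have hvk : u ≤ v k :=
      (Nat.le_log_iff_pow_le (by norm_num) (by have := hnkpos k hk; omega)).2 (le_of_lt hu2)
    have hpair : v k + v ((k+1)%w) ≤ ∑ j ∈ Finset.range w, v j := by
      have hsub : ({k, (k+1)%w} : Finset ℕ) ⊆ Finset.range w := by
        intro x hx
        simp only [Finset.mem_insert, Finset.mem_singleton] at hx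
        rcases hx with rfl | rfl
        · exact Finset.mem_range.2 hk
        · exact Finset.mem_range.2 hsw
      have hps : ∑ j ∈ ({k, (k+1)%w} : Finset ℕ), v j = v k + v ((k+1)%w) :=
        Finset.sum_pair (fun he2 => hsk he2.symm)
      rw [← hps]
      exact Finset.sum_le_sum_of_subset hsub
    omega
  -- (iv)
  have hiv : ∀ i < w, n ≤ lk i →
      nk i = 1 ∧ (∀ j < w, j ≠ i → lk j ≤ n - 1) ∧
      (∀ j₁ < w, ∀ j₂ < w, lk j₁ = n - 1 → lk j₂ = n - 1 → j₁ = j₂) ∧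
      (∀ j < w, lk j = n - 1 → nk j = 3) := by
    intro i hiw hni
    have hnk1 : nk i = 1 := by
      by_contra h1
      have h3 : 2^1 < nk i := by
        have := hodd i hiw
        have := hnkpos i hiw
        omega
      have := hiii i hiw 1 le_rfl h3
      omega
    have hthree : ∀ j < w, lk j = n - 1 → nk j = 3 := by
      intro j hj hlj
      have hjne : j ≠ i := by
        intro he
        rw [he] at hlj
        omega
      have hne1 : nk j ≠ 1 := fun he => hjne (hdist j hj i hiw (by rw [he, hnk1]))
      have ho := hodd j hj
      by_contra h3
      have h5 : 5 ≤ nk j := by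
        have := hnkpos j hj
        omega
      have h4 : 2^2 < nk j := by
        have e : (2:ℕ)^2 = 4 := by norm_num
        omega
      have := hiii j hj 2 (by norm_num) h4
      omega
    refine ⟨hnk1, ?_, ?_, hthree⟩
    · intro j hj hji
      have hne1 : nk j ≠ 1 := fun he => hji (hdist j hj i hiw (by rw [he, hnk1]))
      have h3 : 2^1 < nk j := by
        have := hodd j hj
        have := hnkpos j hj
        omega
      exact hiii j hj 1 le_rfl h3
    · intro j1 hj1 j2 hj2 he1 he2
      exact hdist j1 hj1 j2 hj2 (by rw [hthree j1 hj1 he1, hthree j2 hj2 he2])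
  exact ⟨hi, hodd, hiii, hiv⟩
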